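/- Let E be the 4-dimensional space of 4×4 matrices of linear forms with rows (x_1, x_2, 0, 0), (x_3, x_4, 0, x_1), (0, 0, x_1, x_2), (0, 0, x_3, x_4). Then det(E) = (x_1x_4 − x_2x_3)², yet E does not have constant rank on the quadric {x_1x_4 − x_2x_3 = 0}: there exist points of that quadric where the matrix has rank 2 and points where it has rank 3. -/

import Mathlib

open MvPolynomial Matrix

/-- The counterexample matrix of Remark 3.7. -/
noncomputable def E10 : Matrix (Fin 4) (Fin 4) (MvPolynomial (Fin 4) ℂ) :=
  !![X 0, X 1, 0, 0;
     X 2, X 3, 0, X 0;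
     0, 0, X 0, X 1;
     0, 0, X 2, X 3]

private lemma single0 : (Pi.single 0 1 : Fin 4 → ℂ) = ![1,0,0,0] := by
  funext i; fin_cases i <;> simp

private lemma single1 : (Pi.single 1 1 : Fin 4 → ℂ) = ![0,1,0,0] := by
  funext i; fin_cases i <;> simp

private lemma single2 : (Pi.single 2 1 : Fin 4 → ℂ) = ![0,0,1,0] := by
  funext i; fin_cases i <;> simp

private lemma zerovec : ![(0:ℂ),0,0,0] = 0 := by
  funext i; fin_cases i <;> simp

private lemma li2 : LinearIndependent ℂ ![(Pi.single 0 1 : Fin 4 → ℂ), Pi.single 2 1] := by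
  have := (Pi.basisFun ℂ (Fin 4)).linearIndependent.comp ![0, 2] (by decide)
  convert this using 1
  ext i j
  fin_cases i <;> simp [Pi.basisFun_apply]

private lemma li3 : LinearIndependent ℂ
    ![(Pi.single 0 1 : Fin 4 → ℂ), Pi.single 1 1, Pi.single 2 1] := by
  have := (Pi.basisFun ℂ (Fin 4)).linearIndependent.comp ![0, 1, 2] (by decide)
  convert this using 1
  ext i j
  fin_cases i <;> simp [Pi.basisFun_apply]

/-- Remark 3.7 (counterexample to Proposition 1 of Beauville): `det E10 = (x₁x₄ - x₂x₃)²`,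
but `E10` does not have constant rank on the quadric `{x₁x₄ - x₂x₃ = 0}`: there are points
of the quadric where the matrix has rank `2` and points where it has rank `3`. -/
theorem stmt10 :
    E10.det = (X 0 * X 3 - X 1 * X 2) ^ 2 ∧
    ∃ p q : Fin 4 → ℂ,
      MvPolynomial.eval p (X 0 * X 3 - X 1 * X 2 : MvPolynomial (Fin 4) ℂ) = 0 ∧
      MvPolynomial.eval q (X 0 * X 3 - X 1 * X 2 : MvPolynomial (Fin 4) ℂ) = 0 ∧
      (E10.map (MvPolynomial.eval p)).rank = 2 ∧
      (E10.map (MvPolynomial.eval q)).rank = 3 := by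
  refine ⟨?_, ![0,1,0,0], ![1,0,0,0], by simp, by simp, ?_, ?_⟩
  · simp [E10, Matrix.det_succ_row_zero, Fin.sum_univ_succ, Fin.succAbove]
    ring
  · have hA : E10.map (MvPolynomial.eval ![0,1,0,0]) =
        !![0,1,0,0; 0,0,0,0; 0,0,0,1; 0,0,0,0] := by
      ext i j; fin_cases i <;> fin_cases j <;>
        simp [E10, Matrix.vecHead, Matrix.vecTail]
    rw [hA, Matrix.rank_eq_finrank_span_cols]
    have hT : (!![0,(1:ℂ),0,0; 0,0,0,0; 0,0,0,1; 0,0,0,0])ᵀ =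
        !![0,0,0,0; 1,0,0,0; 0,0,0,0; 0,0,1,0] := by
      ext i j; fin_cases i <;> fin_cases j <;> simp [Matrix.vecHead, Matrix.vecTail]
    have hr : Set.range (show Fin 4 → Fin 4 → ℂ from
        !![0,0,0,0; (1:ℂ),0,0,0; 0,0,0,0; 0,0,1,0]) =
        insert 0 (Set.range ![(Pi.single 0 1 : Fin 4 → ℂ), Pi.single 2 1]) := by
      show Set.range ![![0,0,0,0], ![(1:ℂ),0,0,0], ![0,0,0,0], ![0,0,1,0]] = _
      rw [single0, single2, zerovec]
      ext v
      simp [Matrix.range_cons, Matrix.range_empty]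
      tauto
    rw [show ∀ A : Matrix (Fin 4) (Fin 4) ℂ, A.col = Aᵀ from fun _ => rfl]
    rw [hT, hr, Submodule.span_insert_zero, finrank_span_eq_card li2]
    rfl
  · have hA : E10.map (MvPolynomial.eval ![1,0,0,0]) =
        !![1,0,0,0; 0,0,0,1; 0,0,1,0; 0,0,0,0] := by
      ext i j; fin_cases i <;> fin_cases j <;>
        simp [E10, Matrix.vecHead, Matrix.vecTail]
    rw [hA, Matrix.rank_eq_finrank_span_cols]
    have hT : (!![(1:ℂ),0,0,0; 0,0,0,1; 0,0,1,0; 0,0,0,0])ᵀ =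
        !![1,0,0,0; 0,0,0,0; 0,0,1,0; 0,1,0,0] := by
      ext i j; fin_cases i <;> fin_cases j <;> simp [Matrix.vecHead, Matrix.vecTail]
    have hr : Set.range (show Fin 4 → Fin 4 → ℂ from
        !![(1:ℂ),0,0,0; 0,0,0,0; 0,0,1,0; 0,1,0,0]) =
        insert 0 (Set.range
          ![(Pi.single 0 1 : Fin 4 → ℂ), Pi.single 1 1, Pi.single 2 1]) := by
      show Set.range ![![(1:ℂ),0,0,0], ![0,0,0,0], ![0,0,1,0], ![0,1,0,0]] = _
      rw [single0, single1, single2, zerovec]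
      ext v
      simp [Matrix.range_cons, Matrix.range_empty]
      tauto
    rw [show ∀ A : Matrix (Fin 4) (Fin 4) ℂ, A.col = Aᵀ from fun _ => rfl]
    rw [hT, hr, Submodule.span_insert_zero, finrank_span_eq_card li3]
    rfl
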